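/- With the setup of a bilinear interaction X₀ = X₁ − X₂ (ξ_j ≠ 0, h_j = τ_j ±_j |ξ_j|) and assuming additionally |ξ₀| ≪ |ξ₁| ∼ |ξ₂| and ±₁ ≠ ±₂, one has θ(±₁ξ₁, ±₂ξ₂) ∼ 1 and max(|h₀|,|h₁|,|h₂|) ≳ min(|ξ₁|,|ξ₂|). -/

import Mathlib

open InnerProductGeometry RealInnerProductSpace

/-- For a bilinear interaction `X₀ = X₁ − X₂` (`ξ_j ≠ 0`, `h_j = τ_j ±_j |ξ_j|`) with
`|ξ₀| ≪ |ξ₁| ∼ |ξ₂|` and opposite signs `±₁ ≠ ±₂`, the angle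
`θ(±₁ξ₁,±₂ξ₂)` is `∼ 1` and `max(|h₀|,|h₁|,|h₂|) ≳ min(|ξ₁|,|ξ₂|)`. -/
theorem bilinear_interaction_low_output_opposite_signs :
    ∃ ε c : ℝ, 0 < ε ∧ 0 < c ∧
      ∀ (s₀ s₁ s₂ : ℝ), (s₀ = 1 ∨ s₀ = -1) → (s₁ = 1 ∨ s₁ = -1) → (s₂ = 1 ∨ s₂ = -1) →
      ∀ (τ₀ τ₁ τ₂ : ℝ) (ξ₀ ξ₁ ξ₂ : EuclideanSpace ℝ (Fin 3)),
        ξ₁ ≠ 0 → ξ₂ ≠ 0 → τ₀ = τ₁ - τ₂ → ξ₀ = ξ₁ - ξ₂ →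
        ‖ξ₀‖ ≤ ε * min ‖ξ₁‖ ‖ξ₂‖ → s₁ ≠ s₂ →
        (c ≤ angle (s₁ • ξ₁) (s₂ • ξ₂) ∧ angle (s₁ • ξ₁) (s₂ • ξ₂) ≤ Real.pi) ∧
        c * min ‖ξ₁‖ ‖ξ₂‖ ≤
          max (|τ₀ + s₀ * ‖ξ₀‖|) (max (|τ₁ + s₁ * ‖ξ₁‖|) (|τ₂ + s₂ * ‖ξ₂‖|)) := by
  refine ⟨1/2, 1/2, by norm_num, by norm_num, ?_⟩
  intro s₀ s₁ s₂ hs₀ hs₁ hs₂ τ₀ τ₁ τ₂ ξ₀ ξ₁ ξ₂ hξ₁ hξ₂ hτ hξ hsmall hne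
  have hm1 : min ‖ξ₁‖ ‖ξ₂‖ ≤ ‖ξ₁‖ := min_le_left _ _
  have hm2 : min ‖ξ₁‖ ‖ξ₂‖ ≤ ‖ξ₂‖ := min_le_right _ _
  have hn1 : (0:ℝ) < ‖ξ₁‖ := norm_pos_iff.mpr hξ₁
  have hn2 : (0:ℝ) < ‖ξ₂‖ := norm_pos_iff.mpr hξ₂
  have hmpos : 0 < min ‖ξ₁‖ ‖ξ₂‖ := lt_min hn1 hn2
  have hs21 : s₂ = -s₁ := by rcases hs₁ with h | h <;> rcases hs₂ with h' | h' <;> simp_all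
  have hs₁0 : s₁ ≠ 0 := by rcases hs₁ with h | h <;> rw [h] <;> norm_num
  have hinner : (0:ℝ) ≤ (inner ℝ ξ₁ ξ₂ : ℝ) := by
    have hns : ‖ξ₁ - ξ₂‖ ^ 2 = ‖ξ₁‖ ^ 2 - 2 * (inner ℝ ξ₁ ξ₂ : ℝ) + ‖ξ₂‖ ^ 2 := norm_sub_sq_real ξ₁ ξ₂
    have h0 : ‖ξ₀‖ = ‖ξ₁ - ξ₂‖ := by rw [hξ]
    nlinarith [hsmall, hm1, hm2, norm_nonneg ξ₀, hmpos, sq_nonneg (‖ξ₁‖ - ‖ξ₂‖)]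
  constructor
  · constructor
    · have h1 : angle (s₁ • ξ₁) (s₂ • ξ₂) = Real.pi - angle ξ₁ ξ₂ := by
        rw [hs21, neg_smul, angle_neg_right, angle_smul_smul hs₁0]
      have h2 : angle ξ₁ ξ₂ ≤ Real.pi / 2 := by
        rw [angle]
        exact Real.arccos_le_pi_div_two.mpr
          (div_nonneg hinner (by positivity))
      have h3 : (3:ℝ) < Real.pi := Real.pi_gt_three
      rw [h1]; linarith
    · exact angle_le_pi _ _
  · have key : (3/2) * min ‖ξ₁‖ ‖ξ₂‖ ≤
        |(τ₁ + s₁ * ‖ξ₁‖) - (τ₂ + s₂ * ‖ξ₂‖) - (τ₀ + s₀ * ‖ξ₀‖)| := by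
      have hv : (τ₁ + s₁ * ‖ξ₁‖) - (τ₂ + s₂ * ‖ξ₂‖) - (τ₀ + s₀ * ‖ξ₀‖)
          = s₁ * ‖ξ₁‖ + s₁ * ‖ξ₂‖ - s₀ * ‖ξ₀‖ := by rw [hs21, hτ]; ring
      rw [hv]
      rcases hs₀ with h0 | h0 <;> rcases hs₁ with h1 | h1 <;> rw [h0, h1] <;>
        cases abs_cases (1 * ‖ξ₁‖ + 1 * ‖ξ₂‖ - 1 * ‖ξ₀‖) <;>
        cases abs_cases ((1:ℝ) * ‖ξ₁‖ + 1 * ‖ξ₂‖ - (-1) * ‖ξ₀‖) <;>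
        cases abs_cases ((-1:ℝ) * ‖ξ₁‖ + (-1) * ‖ξ₂‖ - 1 * ‖ξ₀‖) <;>
        cases abs_cases ((-1:ℝ) * ‖ξ₁‖ + (-1) * ‖ξ₂‖ - (-1) * ‖ξ₀‖) <;>
        linarith [norm_nonneg ξ₀]
    have tri : |(τ₁ + s₁ * ‖ξ₁‖) - (τ₂ + s₂ * ‖ξ₂‖) - (τ₀ + s₀ * ‖ξ₀‖)| ≤
        |τ₁ + s₁ * ‖ξ₁‖| + |τ₂ + s₂ * ‖ξ₂‖| + |τ₀ + s₀ * ‖ξ₀‖| := by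
      calc |(τ₁ + s₁ * ‖ξ₁‖) - (τ₂ + s₂ * ‖ξ₂‖) - (τ₀ + s₀ * ‖ξ₀‖)|
          ≤ |(τ₁ + s₁ * ‖ξ₁‖) - (τ₂ + s₂ * ‖ξ₂‖)| + |τ₀ + s₀ * ‖ξ₀‖| := abs_sub _ _
        _ ≤ |τ₁ + s₁ * ‖ξ₁‖| + |τ₂ + s₂ * ‖ξ₂‖| + |τ₀ + s₀ * ‖ξ₀‖| := by
            have := abs_sub (τ₁ + s₁ * ‖ξ₁‖) (τ₂ + s₂ * ‖ξ₂‖)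
            linarith
    have hMA : |τ₀ + s₀ * ‖ξ₀‖| ≤
        max (|τ₀ + s₀ * ‖ξ₀‖|) (max (|τ₁ + s₁ * ‖ξ₁‖|) (|τ₂ + s₂ * ‖ξ₂‖|)) := le_max_left _ _
    have hMB : |τ₁ + s₁ * ‖ξ₁‖| ≤
        max (|τ₀ + s₀ * ‖ξ₀‖|) (max (|τ₁ + s₁ * ‖ξ₁‖|) (|τ₂ + s₂ * ‖ξ₂‖|)) :=
      le_trans (le_max_left _ _) (le_max_right _ _)
    have hMC : |τ₂ + s₂ * ‖ξ₂‖| ≤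
        max (|τ₀ + s₀ * ‖ξ₀‖|) (max (|τ₁ + s₁ * ‖ξ₁‖|) (|τ₂ + s₂ * ‖ξ₂‖|)) :=
      le_trans (le_max_right _ _) (le_max_right _ _)
    linarith
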